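/- arXiv:2210.03525 — 3 statements merged into one kernel-verified Lean document; each statement's English description precedes it below -/
import Mathlib

section
/- If a vector field φ in physical coordinates is related to a vector field ϕ in reference coordinates by the contravariant Piola transformation φ = (1/det J) J ϕ, then the divergences satisfy div_x φ = (1/det J) · div_ξ ϕ. -/
set_option linter.all false


/-- Partial derivative of a scalar field on `ℝ³` in direction `i`. -/
noncomputable def pd3 (f : (Fin 3 → ℝ) → ℝ) (i : Fin 3) (x : Fin 3 → ℝ) : ℝ :=
  fderiv ℝ f x (Pi.single i 1)

/-- The divergence of a vector field on `ℝ³`. -/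
noncomputable def div3 (F : (Fin 3 → ℝ) → (Fin 3 → ℝ)) (x : Fin 3 → ℝ) : ℝ :=
  ∑ i, pd3 (fun y => F y i) i x

/-- The Jacobian matrix of a map `ℝ³ → ℝ³`. -/
noncomputable def jac3 (x : (Fin 3 → ℝ) → (Fin 3 → ℝ)) (ξ : Fin 3 → ℝ) :
    Matrix (Fin 3) (Fin 3) ℝ :=
  Matrix.of fun i j => pd3 (fun y => x y i) j ξ

lemma pd3_of_hasFDerivAt {f : (Fin 3 → ℝ) → ℝ} {L : (Fin 3 → ℝ) →L[ℝ] ℝ} {z : Fin 3 → ℝ}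
    (h : HasFDerivAt f L z) (i : Fin 3) : pd3 f i z = L (Pi.single i 1) := by
  rw [pd3, h.fderiv]

lemma pd3_add {f g : (Fin 3 → ℝ) → ℝ} {z : Fin 3 → ℝ} (hf : DifferentiableAt ℝ f z)
    (hg : DifferentiableAt ℝ g z) (i : Fin 3) :
    pd3 (fun y => f y + g y) i z = pd3 f i z + pd3 g i z := by
  simp [pd3, fderiv_fun_add hf hg]

lemma pd3_sub {f g : (Fin 3 → ℝ) → ℝ} {z : Fin 3 → ℝ} (hf : DifferentiableAt ℝ f z)
    (hg : DifferentiableAt ℝ g z) (i : Fin 3) :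
    pd3 (fun y => f y - g y) i z = pd3 f i z - pd3 g i z := by
  simp [pd3, fderiv_fun_sub hf hg]

lemma pd3_mul {f g : (Fin 3 → ℝ) → ℝ} {z : Fin 3 → ℝ} (hf : DifferentiableAt ℝ f z)
    (hg : DifferentiableAt ℝ g z) (i : Fin 3) :
    pd3 (fun y => f y * g y) i z = pd3 f i z * g z + f z * pd3 g i z := by
  simp [pd3, fderiv_fun_mul hf hg]; ring

lemma pd3_mul3 {f g h : (Fin 3 → ℝ) → ℝ} {z : Fin 3 → ℝ} (hf : DifferentiableAt ℝ f z)
    (hg : DifferentiableAt ℝ g z) (hh : DifferentiableAt ℝ h z) (i : Fin 3) :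
    pd3 (fun y => f y * g y * h y) i z
      = pd3 f i z * g z * h z + f z * pd3 g i z * h z + f z * g z * pd3 h i z := by
  rw [pd3_mul (hf.fun_mul hg) hh i, pd3_mul hf hg i]; ring

lemma pd3_inv {f : (Fin 3 → ℝ) → ℝ} {z : Fin 3 → ℝ} (hf : DifferentiableAt ℝ f z)
    (h0 : f z ≠ 0) (i : Fin 3) :
    pd3 (fun y => (f y)⁻¹) i z = -((f z)^2)⁻¹ * pd3 f i z := by
  have h := (hasDerivAt_inv h0).comp_hasFDerivAt z hf.hasFDerivAt
  rw [Function.comp_def] at h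
  rw [pd3_of_hasFDerivAt h i]
  simp [pd3]

lemma hasFDerivAt_proj {F : (Fin 3 → ℝ) → (Fin 3 → ℝ)} {L : (Fin 3 → ℝ) →L[ℝ] (Fin 3 → ℝ)}
    {z : Fin 3 → ℝ} (hF : HasFDerivAt F L z) (i : Fin 3) :
    HasFDerivAt (fun y => F y i) ((ContinuousLinearMap.proj i).comp L) z := by
  have := ((ContinuousLinearMap.proj (R := ℝ) (φ := fun _ : Fin 3 => ℝ) i).hasFDerivAt
      (x := F z)).comp z hF
  simpa [Function.comp_def] using this

/-- Second partial derivatives of the components of a map `ℝ³ → ℝ³`. -/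
noncomputable def sd3 (x : (Fin 3 → ℝ) → (Fin 3 → ℝ)) (ξ : Fin 3 → ℝ) (i j k : Fin 3) : ℝ :=
  fderiv ℝ (fderiv ℝ (fun y => x y i)) ξ (Pi.single j 1) (Pi.single k 1)

set_option maxHeartbeats 2000000 in
set_option maxRecDepth 100000 in
/-- **Contravariant Piola transformation of the divergence.**
Let `x : Ω → V` be a diffeomorphism of open subsets of `ℝ³` with Jacobian `J = Dx`,
`det J ≠ 0`.  If the vector field `φ` in physical coordinates is related to the vector
field `ϕ` in reference coordinates by the contravariant Piola transformation
`φ(x ξ) = (1/det J(ξ)) J(ξ) ϕ(ξ)`, then `div_x φ (x ξ₀) = (1/det J(ξ₀)) div_ξ ϕ (ξ₀)`. -/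
theorem div_contravariant_piola
    (Ω V : Set (Fin 3 → ℝ)) (hΩ : IsOpen Ω) (hV : IsOpen V)
    (x xinv : (Fin 3 → ℝ) → (Fin 3 → ℝ))
    (hmaps : Set.MapsTo x Ω V) (hmaps' : Set.MapsTo xinv V Ω)
    (hleft : ∀ ξ ∈ Ω, xinv (x ξ) = ξ) (hright : ∀ y ∈ V, x (xinv y) = y)
    (hx : ContDiffOn ℝ 2 x Ω) (hxinv : ContDiffOn ℝ 2 xinv V)
    (ϕ φ : (Fin 3 → ℝ) → (Fin 3 → ℝ))
    (hϕ : DifferentiableOn ℝ ϕ Ω) (hφ : DifferentiableOn ℝ φ V)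
    (ξ₀ : Fin 3 → ℝ) (hξ₀ : ξ₀ ∈ Ω)
    (hdet : ∀ ξ ∈ Ω, (jac3 x ξ).det ≠ 0)
    (hpiola : ∀ ξ ∈ Ω, φ (x ξ) = ((jac3 x ξ).det)⁻¹ • (jac3 x ξ).mulVec (ϕ ξ)) :
    div3 φ (x ξ₀) = ((jac3 x ξ₀).det)⁻¹ * div3 ϕ ξ₀ := by
  have hΩn : Ω ∈ nhds ξ₀ := hΩ.mem_nhds hξ₀
  have hxV : x ξ₀ ∈ V := hmaps hξ₀
  have hVn : V ∈ nhds (x ξ₀) := hV.mem_nhds hxV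
  have hx2 : ContDiffAt ℝ 2 x ξ₀ := hx.contDiffAt hΩn
  have hxd : DifferentiableAt ℝ x ξ₀ := hx2.differentiableAt (by norm_num)
  have hφd : DifferentiableAt ℝ φ (x ξ₀) := hφ.differentiableAt hVn
  have hϕd : DifferentiableAt ℝ ϕ ξ₀ := hϕ.differentiableAt hΩn
  have hd0 : (jac3 x ξ₀).det ≠ 0 := hdet ξ₀ hξ₀
  have hxi2 : ∀ i, ContDiffAt ℝ 2 (fun y => x y i) ξ₀ := by
    intro i
    have := (ContinuousLinearMap.proj (R := ℝ) (φ := fun _ : Fin 3 => ℝ) i).contDiff.comp_contDiffAt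
      (x := ξ₀) hx2
    simpa [Function.comp_def] using this
  have hfd2 : ∀ i, DifferentiableAt ℝ (fderiv ℝ (fun y => x y i)) ξ₀ := fun i =>
    ((hxi2 i).fderiv_right (m := 1) (by norm_num)).differentiableAt one_ne_zero
  -- derivatives of the Jacobian entries
  have hE : ∀ i k : Fin 3, HasFDerivAt (fun ξ => jac3 x ξ i k)
      ((ContinuousLinearMap.apply ℝ ℝ (Pi.single k 1)).comp
        (fderiv ℝ (fderiv ℝ (fun y => x y i)) ξ₀)) ξ₀ := by
    intro i k
    have h := ((ContinuousLinearMap.apply ℝ ℝ (Pi.single k 1)).hasFDerivAt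
        (x := fderiv ℝ (fun y => x y i) ξ₀)).comp ξ₀ (hfd2 i).hasFDerivAt
    have heq : (fun ξ => jac3 x ξ i k)
        = fun ξ => (ContinuousLinearMap.apply ℝ ℝ (Pi.single k 1)) (fderiv ℝ (fun y => x y i) ξ) := by
      funext ξ; simp [jac3, pd3]
    rw [heq]
    simpa [Function.comp_def] using h
  have hEd : ∀ i k : Fin 3, DifferentiableAt ℝ (fun ξ => jac3 x ξ i k) ξ₀ :=
    fun i k => (hE i k).differentiableAt
  have hS : ∀ i k j : Fin 3, pd3 (fun ξ => jac3 x ξ i k) j ξ₀ = sd3 x ξ₀ i j k := by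
    intro i k j
    rw [pd3_of_hasFDerivAt (hE i k) j]
    simp [sd3]
  have hSswap : ∀ i j k : Fin 3, sd3 x ξ₀ i j k = sd3 x ξ₀ i k j := by
    intro i j k
    exact ((hxi2 i).isSymmSndFDerivAt (by norm_num)) _ _
  -- the determinant function
  have hdeq : (fun ξ => (jac3 x ξ).det) = (fun ξ =>
      jac3 x ξ 0 0 * jac3 x ξ 1 1 * jac3 x ξ 2 2 - jac3 x ξ 0 0 * jac3 x ξ 1 2 * jac3 x ξ 2 1
      - jac3 x ξ 0 1 * jac3 x ξ 1 0 * jac3 x ξ 2 2 + jac3 x ξ 0 1 * jac3 x ξ 1 2 * jac3 x ξ 2 0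
      + jac3 x ξ 0 2 * jac3 x ξ 1 0 * jac3 x ξ 2 1 - jac3 x ξ 0 2 * jac3 x ξ 1 1 * jac3 x ξ 2 0) :=
    funext fun ξ => Matrix.det_fin_three _
  have hm : ∀ i1 k1 i2 k2 i3 k3 : Fin 3, DifferentiableAt ℝ
      (fun ξ => jac3 x ξ i1 k1 * jac3 x ξ i2 k2 * jac3 x ξ i3 k3) ξ₀ :=
    fun i1 k1 i2 k2 i3 k3 => ((hEd i1 k1).mul (hEd i2 k2)).mul (hEd i3 k3)
  have q1 := hm 0 0 1 1 2 2
  have q2 := hm 0 0 1 2 2 1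
  have q3 := hm 0 1 1 0 2 2
  have q4 := hm 0 1 1 2 2 0
  have q5 := hm 0 2 1 0 2 1
  have q6 := hm 0 2 1 1 2 0
  have hddiff : DifferentiableAt ℝ (fun ξ => (jac3 x ξ).det) ξ₀ := by
    rw [hdeq]
    exact ((((q1.sub q2).sub q3).add q4).add q5).sub q6
  -- Jacobi-type formula for the derivative of the determinant
  have hDd : ∀ j : Fin 3, pd3 (fun ξ => (jac3 x ξ).det) j ξ₀ =
      sd3 x ξ₀ 0 j 0 * jac3 x ξ₀ 1 1 * jac3 x ξ₀ 2 2
      + jac3 x ξ₀ 0 0 * sd3 x ξ₀ 1 j 1 * jac3 x ξ₀ 2 2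
      + jac3 x ξ₀ 0 0 * jac3 x ξ₀ 1 1 * sd3 x ξ₀ 2 j 2
      - (sd3 x ξ₀ 0 j 0 * jac3 x ξ₀ 1 2 * jac3 x ξ₀ 2 1
        + jac3 x ξ₀ 0 0 * sd3 x ξ₀ 1 j 2 * jac3 x ξ₀ 2 1
        + jac3 x ξ₀ 0 0 * jac3 x ξ₀ 1 2 * sd3 x ξ₀ 2 j 1)
      - (sd3 x ξ₀ 0 j 1 * jac3 x ξ₀ 1 0 * jac3 x ξ₀ 2 2
        + jac3 x ξ₀ 0 1 * sd3 x ξ₀ 1 j 0 * jac3 x ξ₀ 2 2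
        + jac3 x ξ₀ 0 1 * jac3 x ξ₀ 1 0 * sd3 x ξ₀ 2 j 2)
      + (sd3 x ξ₀ 0 j 1 * jac3 x ξ₀ 1 2 * jac3 x ξ₀ 2 0
        + jac3 x ξ₀ 0 1 * sd3 x ξ₀ 1 j 2 * jac3 x ξ₀ 2 0
        + jac3 x ξ₀ 0 1 * jac3 x ξ₀ 1 2 * sd3 x ξ₀ 2 j 0)
      + (sd3 x ξ₀ 0 j 2 * jac3 x ξ₀ 1 0 * jac3 x ξ₀ 2 1
        + jac3 x ξ₀ 0 2 * sd3 x ξ₀ 1 j 0 * jac3 x ξ₀ 2 1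
        + jac3 x ξ₀ 0 2 * jac3 x ξ₀ 1 0 * sd3 x ξ₀ 2 j 1)
      - (sd3 x ξ₀ 0 j 2 * jac3 x ξ₀ 1 1 * jac3 x ξ₀ 2 0
        + jac3 x ξ₀ 0 2 * sd3 x ξ₀ 1 j 1 * jac3 x ξ₀ 2 0
        + jac3 x ξ₀ 0 2 * jac3 x ξ₀ 1 1 * sd3 x ξ₀ 2 j 0) := by
    intro j
    rw [hdeq]
    rw [pd3_sub ((((q1.fun_sub q2).fun_sub q3).fun_add q4).fun_add q5) q6 j,
      pd3_add (((q1.fun_sub q2).fun_sub q3).fun_add q4) q5 j,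
      pd3_add ((q1.fun_sub q2).fun_sub q3) q4 j,
      pd3_sub (q1.fun_sub q2) q3 j,
      pd3_sub q1 q2 j,
      pd3_mul3 (hEd 0 0) (hEd 1 1) (hEd 2 2) j,
      pd3_mul3 (hEd 0 0) (hEd 1 2) (hEd 2 1) j,
      pd3_mul3 (hEd 0 1) (hEd 1 0) (hEd 2 2) j,
      pd3_mul3 (hEd 0 1) (hEd 1 2) (hEd 2 0) j,
      pd3_mul3 (hEd 0 2) (hEd 1 0) (hEd 2 1) j,
      pd3_mul3 (hEd 0 2) (hEd 1 1) (hEd 2 0) j,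
      hS 0 0 j, hS 1 1 j, hS 2 2 j, hS 1 2 j, hS 2 1 j, hS 0 1 j, hS 1 0 j,
      hS 2 0 j, hS 0 2 j]
  -- derivatives of the components of ϕ
  have hϕk : ∀ k : Fin 3, HasFDerivAt (fun y => ϕ y k)
      ((ContinuousLinearMap.proj k).comp (fderiv ℝ ϕ ξ₀)) ξ₀ :=
    fun k => hasFDerivAt_proj hϕd.hasFDerivAt k
  have hp : ∀ k j : Fin 3, pd3 (fun y => ϕ y k) j ξ₀ = fderiv ℝ ϕ ξ₀ (Pi.single j 1) k := by
    intro k j; rw [pd3_of_hasFDerivAt (hϕk k) j]; simp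
  have hϕkd : ∀ k, DifferentiableAt ℝ (fun y => ϕ y k) ξ₀ := fun k => (hϕk k).differentiableAt
  have hdinv : DifferentiableAt ℝ (fun ξ => ((jac3 x ξ).det)⁻¹) ξ₀ := by
    have h := (hasDerivAt_inv hd0).comp_hasFDerivAt ξ₀ hddiff.hasFDerivAt
    rw [Function.comp_def] at h
    exact h.differentiableAt
  -- the Piola formula side
  have hG : ∀ i j : Fin 3, pd3 (fun ξ => φ (x ξ) i) j ξ₀ =
      -(((jac3 x ξ₀).det)^2)⁻¹ * pd3 (fun ξ => (jac3 x ξ).det) j ξ₀ *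
        (jac3 x ξ₀ i 0 * ϕ ξ₀ 0 + jac3 x ξ₀ i 1 * ϕ ξ₀ 1 + jac3 x ξ₀ i 2 * ϕ ξ₀ 2)
      + ((jac3 x ξ₀).det)⁻¹ *
        (sd3 x ξ₀ i j 0 * ϕ ξ₀ 0 + sd3 x ξ₀ i j 1 * ϕ ξ₀ 1 + sd3 x ξ₀ i j 2 * ϕ ξ₀ 2
        + jac3 x ξ₀ i 0 * fderiv ℝ ϕ ξ₀ (Pi.single j 1) 0
        + jac3 x ξ₀ i 1 * fderiv ℝ ϕ ξ₀ (Pi.single j 1) 1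
        + jac3 x ξ₀ i 2 * fderiv ℝ ϕ ξ₀ (Pi.single j 1) 2) := by
    intro i j
    have hcong : (fun ξ => φ (x ξ) i) =ᶠ[nhds ξ₀] (fun ξ =>
        ((jac3 x ξ).det)⁻¹ *
          (jac3 x ξ i 0 * ϕ ξ 0 + jac3 x ξ i 1 * ϕ ξ 1 + jac3 x ξ i 2 * ϕ ξ 2)) := by
      filter_upwards [hΩn] with ξ hξ
      rw [hpiola ξ hξ]
      simp [Matrix.mulVec, dotProduct, Fin.sum_univ_three, mul_comm]
    have hpd : pd3 (fun ξ => φ (x ξ) i) j ξ₀ = pd3 (fun ξ =>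
        ((jac3 x ξ).det)⁻¹ *
          (jac3 x ξ i 0 * ϕ ξ 0 + jac3 x ξ i 1 * ϕ ξ 1 + jac3 x ξ i 2 * ϕ ξ 2)) j ξ₀ := by
      rw [pd3, pd3, hcong.fderiv_eq]
    have hm1 : DifferentiableAt ℝ (fun ξ => jac3 x ξ i 0 * ϕ ξ 0) ξ₀ := (hEd i 0).mul (hϕkd 0)
    have hm2 : DifferentiableAt ℝ (fun ξ => jac3 x ξ i 1 * ϕ ξ 1) ξ₀ := (hEd i 1).mul (hϕkd 1)
    have hm3 : DifferentiableAt ℝ (fun ξ => jac3 x ξ i 2 * ϕ ξ 2) ξ₀ := (hEd i 2).mul (hϕkd 2)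
    rw [hpd, pd3_mul hdinv ((hm1.fun_add hm2).fun_add hm3) j, pd3_inv hddiff hd0 j,
      pd3_add (hm1.fun_add hm2) hm3 j, pd3_add hm1 hm2 j,
      pd3_mul (hEd i 0) (hϕkd 0) j, pd3_mul (hEd i 1) (hϕkd 1) j,
      pd3_mul (hEd i 2) (hϕkd 2) j,
      hS i 0 j, hS i 1 j, hS i 2 j, hp 0 j, hp 1 j, hp 2 j]
    ring
  -- the chain rule side
  have hchain : ∀ i j : Fin 3, pd3 (fun ξ => φ (x ξ) i) j ξ₀ =
      fderiv ℝ φ (x ξ₀) (Pi.single 0 1) i * jac3 x ξ₀ 0 j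
      + fderiv ℝ φ (x ξ₀) (Pi.single 1 1) i * jac3 x ξ₀ 1 j
      + fderiv ℝ φ (x ξ₀) (Pi.single 2 1) i * jac3 x ξ₀ 2 j := by
    intro i j
    have hcomp : HasFDerivAt (fun ξ => φ (x ξ))
        ((fderiv ℝ φ (x ξ₀)).comp (fderiv ℝ x ξ₀)) ξ₀ := by
      have := (hφd.hasFDerivAt).comp ξ₀ hxd.hasFDerivAt
      simpa [Function.comp_def] using this
    rw [pd3_of_hasFDerivAt (hasFDerivAt_proj hcomp i) j]
    have hv : fderiv ℝ x ξ₀ (Pi.single j 1) = fun k => jac3 x ξ₀ k j := by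
      funext k
      have h2 := pd3_of_hasFDerivAt (hasFDerivAt_proj hxd.hasFDerivAt k) j
      simp only [ContinuousLinearMap.comp_apply, ContinuousLinearMap.proj_apply] at h2
      rw [← h2]; simp [jac3, pd3]
    simp only [ContinuousLinearMap.comp_apply, ContinuousLinearMap.proj_apply, hv]
    have hdec : (fun k => jac3 x ξ₀ k j) =
        jac3 x ξ₀ 0 j • (Pi.single 0 1 : Fin 3 → ℝ)
        + jac3 x ξ₀ 1 j • (Pi.single 1 1 : Fin 3 → ℝ)
        + jac3 x ξ₀ 2 j • (Pi.single 2 1 : Fin 3 → ℝ) := by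
      funext k; fin_cases k <;> simp [Pi.single_apply] <;> norm_num
    rw [hdec]
    simp only [map_add, map_smul, Pi.add_apply, Pi.smul_apply, smul_eq_mul]
    ring
  -- divergence of φ at x ξ₀
  have hdivφ : div3 φ (x ξ₀) = fderiv ℝ φ (x ξ₀) (Pi.single 0 1) 0
      + fderiv ℝ φ (x ξ₀) (Pi.single 1 1) 1 + fderiv ℝ φ (x ξ₀) (Pi.single 2 1) 2 := by
    have h : ∀ i : Fin 3, pd3 (fun y => φ y i) i (x ξ₀)
        = fderiv ℝ φ (x ξ₀) (Pi.single i 1) i := by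
      intro i; rw [pd3_of_hasFDerivAt (hasFDerivAt_proj hφd.hasFDerivAt i) i]; simp
    simp [div3, Fin.sum_univ_three, h]
  have hdivϕ : div3 ϕ ξ₀ = fderiv ℝ ϕ ξ₀ (Pi.single 0 1) 0
      + fderiv ℝ ϕ ξ₀ (Pi.single 1 1) 1 + fderiv ℝ ϕ ξ₀ (Pi.single 2 1) 2 := by
    simp [div3, Fin.sum_univ_three, hp]
  -- solve for the physical-space derivative matrix
  have hTmat : (Matrix.of fun i k => fderiv ℝ φ (x ξ₀) (Pi.single k 1) i) * jac3 x ξ₀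
      = Matrix.of fun i j => pd3 (fun ξ => φ (x ξ) i) j ξ₀ := by
    ext i j
    simp only [Matrix.mul_apply, Fin.sum_univ_three, Matrix.of_apply, hchain i j]
  have hTinv : (Matrix.of fun i k => fderiv ℝ φ (x ξ₀) (Pi.single k 1) i)
      = (Matrix.of fun i j => pd3 (fun ξ => φ (x ξ) i) j ξ₀) * (jac3 x ξ₀)⁻¹ := by
    rw [← hTmat, Matrix.mul_nonsing_inv_cancel_right _ _ (Ne.isUnit hd0)]
  have htr : ∀ i : Fin 3, fderiv ℝ φ (x ξ₀) (Pi.single i 1) i =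
      pd3 (fun ξ => φ (x ξ) i) 0 ξ₀ * (jac3 x ξ₀)⁻¹ 0 i
      + pd3 (fun ξ => φ (x ξ) i) 1 ξ₀ * (jac3 x ξ₀)⁻¹ 1 i
      + pd3 (fun ξ => φ (x ξ) i) 2 ξ₀ * (jac3 x ξ₀)⁻¹ 2 i := by
    intro i
    have h := congrFun (congrFun hTinv i) i
    simpa [Matrix.mul_apply, Fin.sum_univ_three, Matrix.of_apply] using h
  have hAinv : (jac3 x ξ₀)⁻¹ = ((jac3 x ξ₀).det)⁻¹ • (jac3 x ξ₀).adjugate := by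
    rw [Matrix.inv_def, Ring.inverse_eq_inv']
  -- final assembly
  rw [hdivφ, htr 0, htr 1, htr 2,
    hG 0 0, hG 0 1, hG 0 2, hG 1 0, hG 1 1, hG 1 2, hG 2 0, hG 2 1, hG 2 2,
    hDd 0, hDd 1, hDd 2, hdivϕ, hAinv]
  simp only [Matrix.smul_apply, Matrix.adjugate_fin_three, Matrix.of_apply,
    Matrix.cons_val', Matrix.cons_val_zero, Matrix.cons_val_one, Matrix.head_cons,
    Matrix.empty_val', Matrix.cons_val_fin_one, Matrix.head_fin_const, smul_eq_mul, Matrix.cons_val]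
  have e1 : ∀ i, sd3 x ξ₀ i 1 0 = sd3 x ξ₀ i 0 1 := fun i => hSswap i 1 0
  have e2 : ∀ i, sd3 x ξ₀ i 2 0 = sd3 x ξ₀ i 0 2 := fun i => hSswap i 2 0
  have e3 : ∀ i, sd3 x ξ₀ i 2 1 = sd3 x ξ₀ i 1 2 := fun i => hSswap i 2 1
  simp only [e1, e2, e3]
  have hdet3 : (jac3 x ξ₀).det =
      jac3 x ξ₀ 0 0 * jac3 x ξ₀ 1 1 * jac3 x ξ₀ 2 2
      - jac3 x ξ₀ 0 0 * jac3 x ξ₀ 1 2 * jac3 x ξ₀ 2 1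
      - jac3 x ξ₀ 0 1 * jac3 x ξ₀ 1 0 * jac3 x ξ₀ 2 2
      + jac3 x ξ₀ 0 1 * jac3 x ξ₀ 1 2 * jac3 x ξ₀ 2 0
      + jac3 x ξ₀ 0 2 * jac3 x ξ₀ 1 0 * jac3 x ξ₀ 2 1
      - jac3 x ξ₀ 0 2 * jac3 x ξ₀ 1 1 * jac3 x ξ₀ 2 0 := Matrix.det_fin_three _
  field_simp
  rw [hdet3]
  ring
end

section
/- Let ϑ(ξ,η) = (c₁η − c₂, c₃ − c₁ξ) with c₁ ≠ 0, and let n be a polynomial of degree exactly p. Then the scalar curl of n·ϑ, namely rot(nϑ) = (c₃ − c₁ξ) ∂_ξ n + (c₂ − c₁η)(−∂_η n)·(−1) − 2c₁ n = (c₃ − c₁ξ) n_ξ + (c₂ − c₁η) n_η − 2 c₁ n, is a polynomial of degree exactly p; in particular the polynomial degree of n is preserved under this curl operation. -/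
open MvPolynomial

/-- The scalar curl of `n·ϑ` for the template vector field
`ϑ(ξ,η) = (c₁η - c₂, c₃ - c₁ξ)`:
`rot(nϑ) = (c₃ - c₁ξ) n_ξ + (c₂ - c₁η) n_η - 2c₁ n`. -/
noncomputable def rotTemplate (c₁ c₂ c₃ : ℝ) (n : MvPolynomial (Fin 2) ℝ) :
    MvPolynomial (Fin 2) ℝ :=
  (C c₃ - C c₁ * X 0) * pderiv 0 n + (C c₂ - C c₁ * X 1) * pderiv 1 n - C (2 * c₁) * n

lemma coeff_pderiv' {σ : Type*} [DecidableEq σ] (i : σ) (f : MvPolynomial σ ℝ)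
    (m : σ →₀ ℕ) :
    coeff m (pderiv i f) = (m i + 1) * coeff (m + Finsupp.single i 1) f := by
  induction f using MvPolynomial.induction_on' with
  | monomial s a =>
    rw [pderiv_monomial, coeff_monomial, coeff_monomial]
    by_cases hs : s i = 0
    · have h1 : s ≠ m + Finsupp.single i 1 := by
        intro h; apply_fun (· i) at h; simp [hs] at h
      simp [h1, hs]
    · have h2 : s - Finsupp.single i 1 = m ↔ s = m + Finsupp.single i 1 := by
        constructor
        · intro h; rw [← h]; ext j
          rcases eq_or_ne j i with rfl | hj
          · simp; omega
          · simp [Finsupp.single_apply, hj.symm, Ne.symm hj]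
        · intro h; rw [h]; ext j
          rcases eq_or_ne j i with rfl | hj
          · simp
          · simp [Finsupp.single_apply, Ne.symm hj]
      by_cases h : s = m + Finsupp.single i 1
      · have : s i = m i + 1 := by rw [h]; simp
        simp [h2.mpr h, h, this, mul_comm]
      · simp [h, (not_iff_not.mpr h2).mpr h]
  | add f g hf hg => simp [map_add, coeff_add, hf, hg]; ring

lemma coeff_X_mul_pderiv (i : Fin 2) (f : MvPolynomial (Fin 2) ℝ) (m : Fin 2 →₀ ℕ) :
    coeff m (X i * pderiv i f) = (m i : ℝ) * coeff m f := by
  rw [coeff_X_mul' m i (pderiv i f)]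
  by_cases h : i ∈ m.support
  · have hmi : 1 ≤ m i := by simpa [Finsupp.mem_support_iff, Nat.one_le_iff_ne_zero] using h
    rw [if_pos h, coeff_pderiv']
    have h1 : ((m - Finsupp.single i 1 : Fin 2 →₀ ℕ)) i + 1 = m i := by
      rw [Finsupp.tsub_apply]; simp; omega
    have h2 : m - Finsupp.single i 1 + Finsupp.single i 1 = m := by
      ext j; rcases eq_or_ne j i with rfl | hj
      · simp; omega
      · simp [Finsupp.single_apply, Ne.symm hj]
    rw [h2, ← h1]; push_cast; ring
  · have : m i = 0 := by simpa [Finsupp.mem_support_iff] using h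
    simp [h, this]

lemma coeff_rot (c₁ c₂ c₃ : ℝ) (n : MvPolynomial (Fin 2) ℝ) (m : Fin 2 →₀ ℕ) :
    coeff m (rotTemplate c₁ c₂ c₃ n) =
      c₃ * coeff m (pderiv 0 n) + c₂ * coeff m (pderiv 1 n)
        - c₁ * ((m 0 : ℝ) + (m 1 : ℝ) + 2) * coeff m n := by
  simp only [rotTemplate, sub_mul, mul_assoc, coeff_add, coeff_sub, coeff_C_mul,
    coeff_X_mul_pderiv]
  ring

lemma finsupp_sum_two (d : Fin 2 →₀ ℕ) : (d.sum fun _ e => e) = d 0 + d 1 := by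
  rw [Finsupp.sum_fintype _ _ (fun _ => rfl), Fin.sum_univ_two]


/-- For `ϑ(ξ,η) = (c₁η - c₂, c₃ - c₁ξ)` with `c₁ ≠ 0` and a nonzero bivariate
polynomial `n` of total degree exactly `p`, the scalar curl `rot(nϑ)` is a polynomial
of degree exactly `p`: the polynomial degree is preserved under this curl operation. -/
theorem rotTemplate_totalDegree (c₁ c₂ c₃ : ℝ) (hc₁ : c₁ ≠ 0)
    (p : ℕ) (n : MvPolynomial (Fin 2) ℝ) (hn : n ≠ 0) (hdeg : n.totalDegree = p) :
    (rotTemplate c₁ c₂ c₃ n).totalDegree = p := by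
  have hz : ∀ (m : Fin 2 →₀ ℕ) (i : Fin 2), p ≤ m 0 + m 1 →
      coeff (m + Finsupp.single i 1) n = 0 := by
    intro m i hm
    have h1 : ((m + Finsupp.single i 1).sum fun _ e => e) = m 0 + m 1 + 1 := by
      rw [finsupp_sum_two]; fin_cases i <;> simp [Finsupp.single_apply] <;> omega
    have h2 : n.totalDegree < (m + Finsupp.single i 1).sum fun _ e => e := by
      rw [h1, hdeg]; omega
    exact coeff_eq_zero_of_totalDegree_lt (by rwa [Finsupp.sum] at h2)
  have key : ∀ m : Fin 2 →₀ ℕ, m 0 + m 1 = p →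
      coeff m (rotTemplate c₁ c₂ c₃ n) = -c₁ * (p + 2) * coeff m n := by
    intro m hm
    have hcast : (m 0 : ℝ) + (m 1 : ℝ) = p := by exact_mod_cast hm
    rw [coeff_rot, coeff_pderiv' 0 n m, coeff_pderiv' 1 n m, hz m 0 hm.ge, hz m 1 hm.ge,
      hcast]
    ring
  apply le_antisymm
  · rw [totalDegree]
    apply Finset.sup_le
    intro m hm'
    rw [MvPolynomial.mem_support_iff] at hm'
    rw [finsupp_sum_two]
    by_contra hlt
    push_neg at hlt
    apply hm'
    have hc : coeff m n = 0 := by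
      have h2 : n.totalDegree < m.sum fun _ e => e := by
        rw [finsupp_sum_two, hdeg]; omega
      exact coeff_eq_zero_of_totalDegree_lt (by rwa [Finsupp.sum] at h2)
    rw [coeff_rot, coeff_pderiv' 0 n m, coeff_pderiv' 1 n m,
      hz m 0 (by omega), hz m 1 (by omega), hc]
    ring
  · have hne : n.support.Nonempty := Finset.nonempty_iff_ne_empty.mpr
      (fun h => hn (support_eq_empty.mp h))
    obtain ⟨m, hm, hmd⟩ := Finset.exists_mem_eq_sup n.support hne (fun s => s.sum fun _ e => e)
    have hmp : m 0 + m 1 = p := by rw [← finsupp_sum_two, ← hmd]; exact hdeg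
    have hcoeff : coeff m (rotTemplate c₁ c₂ c₃ n) ≠ 0 := by
      rw [key m hmp]
      refine mul_ne_zero (mul_ne_zero (neg_ne_zero.mpr hc₁) (by positivity)) ?_
      exact MvPolynomial.mem_support_iff.mp hm
    have := le_totalDegree (MvPolynomial.mem_support_iff.mpr hcoeff)
    rwa [finsupp_sum_two, hmp] at this
end

section
/- For the antiplane shear relaxed micromorphic bilinear form a((u,p),(u,p)) = ∫_A μ_e|∇u − p|² + μ_micro|p|² + μ_macro L_c² (rot p)² dA with positive constants μ_e, μ_micro, μ_macro, L_c, the form is coercive on H₀¹(A) × H₀(curl, A) in the sense that a((u,p),(u,p)) ≥ c(‖∇u‖²_{L²} + ‖p‖²_{L²} + ‖rot p‖²_{L²}) for some c > 0 depending only on the material constants. -/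
open MeasureTheory

/-- **Coercivity of the antiplane-shear relaxed micromorphic bilinear form.**
For positive material constants `μ_e, μ_micro, μ_macro, L_c` there is a constant
`c > 0`, depending only on the material constants, such that for every bounded open
domain `A ⊆ ℝ²` and all fields `∇u` (the gradient of the displacement), `p` (the
microdistortion) and `rot p` (its scalar curl), all square-integrable on `A`,
the quadratic form
`a((u,p),(u,p)) = ∫_A μ_e ‖∇u - p‖² + μ_micro ‖p‖² + μ_macro L_c² (rot p)²`
dominates `c (‖∇u‖²_{L²} + ‖p‖²_{L²} + ‖rot p‖²_{L²})`. -/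
theorem relaxed_micromorphic_antiplane_coercive
    (μe μmicro μmacro Lc : ℝ)
    (hμe : 0 < μe) (hμmicro : 0 < μmicro) (hμmacro : 0 < μmacro) (hLc : 0 < Lc) :
    ∃ c > 0,
      ∀ (A : Set (EuclideanSpace ℝ (Fin 2))), MeasurableSet A → IsOpen A →
        Bornology.IsBounded A →
        ∀ (Du P : EuclideanSpace ℝ (Fin 2) → EuclideanSpace ℝ (Fin 2))
          (rotP : EuclideanSpace ℝ (Fin 2) → ℝ),
          IntegrableOn (fun x => ‖Du x‖ ^ 2) A volume →
          IntegrableOn (fun x => ‖P x‖ ^ 2) A volume →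
          IntegrableOn (fun x => (rotP x) ^ 2) A volume →
          AEStronglyMeasurable (fun x => Du x - P x) (volume.restrict A) →
          c * ((∫ x in A, ‖Du x‖ ^ 2) + (∫ x in A, ‖P x‖ ^ 2) +
                (∫ x in A, (rotP x) ^ 2)) ≤
            ∫ x in A, (μe * ‖Du x - P x‖ ^ 2 + μmicro * ‖P x‖ ^ 2 +
              μmacro * Lc ^ 2 * (rotP x) ^ 2) := by
  refine ⟨min (min (μe / 2) (μmicro / 3)) (μmacro * Lc ^ 2), ?_, ?_⟩
  · exact lt_min (lt_min (by linarith) (by linarith)) (by positivity)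
  intro A hAm hAo hAb Du P rotP hDu hP hrot hmeas
  set c : ℝ := min (min (μe / 2) (μmicro / 3)) (μmacro * Lc ^ 2) with hc
  have hc1 : c ≤ μe / 2 := le_trans (min_le_left _ _) (min_le_left _ _)
  have hc2 : c ≤ μmicro / 3 := le_trans (min_le_left _ _) (min_le_right _ _)
  have hc3 : c ≤ μmacro * Lc ^ 2 := min_le_right _ _
  have hc0 : 0 ≤ c := le_min (le_min (by linarith) (by linarith)) (by positivity)
  -- integrability of ‖Du - P‖²
  have hDuP : IntegrableOn (fun x => ‖Du x - P x‖ ^ 2) A volume := by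
    refine Integrable.mono' ((hDu.const_mul 2).add (hP.const_mul 2))
      ((hmeas.norm.pow 2)) ?_
    filter_upwards with x
    have h1 : ‖Du x - P x‖ ≤ ‖Du x‖ + ‖P x‖ := norm_sub_le _ _
    have h2 : 0 ≤ ‖Du x - P x‖ := norm_nonneg _
    have h3 : 0 ≤ ‖Du x‖ := norm_nonneg _
    have h4 : 0 ≤ ‖P x‖ := norm_nonneg _
    simp only [Real.norm_eq_abs, Pi.add_apply,
      abs_of_nonneg (by positivity : (0:ℝ) ≤ ‖Du x - P x‖ ^ 2)]
    nlinarith [sq_nonneg (‖Du x‖ - ‖P x‖), sq_nonneg (‖Du x‖ + ‖P x‖)]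
  have hRHS : IntegrableOn (fun x => μe * ‖Du x - P x‖ ^ 2 + μmicro * ‖P x‖ ^ 2 +
      μmacro * Lc ^ 2 * (rotP x) ^ 2) A volume :=
    ((hDuP.const_mul μe).add (hP.const_mul μmicro)).add (hrot.const_mul (μmacro * Lc ^ 2))
  have hLHS : IntegrableOn (fun x => c * (‖Du x‖ ^ 2 + ‖P x‖ ^ 2 + (rotP x) ^ 2)) A volume := by
    have h12 : IntegrableOn (fun x => ‖Du x‖ ^ 2 + ‖P x‖ ^ 2) A volume := hDu.add hP
    exact (h12.add hrot).const_mul c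
  have key : (∫ x in A, c * (‖Du x‖ ^ 2 + ‖P x‖ ^ 2 + (rotP x) ^ 2)) ≤
      ∫ x in A, (μe * ‖Du x - P x‖ ^ 2 + μmicro * ‖P x‖ ^ 2 +
        μmacro * Lc ^ 2 * (rotP x) ^ 2) := by
    refine integral_mono_ae hLHS hRHS ?_
    filter_upwards with x
    have h1 : ‖Du x‖ ≤ ‖Du x - P x‖ + ‖P x‖ := by
      calc ‖Du x‖ = ‖Du x - P x + P x‖ := by rw [sub_add_cancel]
        _ ≤ ‖Du x - P x‖ + ‖P x‖ := norm_add_le _ _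
    have h2 : 0 ≤ ‖Du x - P x‖ := norm_nonneg _
    have h3 : 0 ≤ ‖Du x‖ := norm_nonneg _
    have h4 : 0 ≤ ‖P x‖ := norm_nonneg _
    have h5 : ‖Du x‖ ^ 2 ≤ 2 * ‖Du x - P x‖ ^ 2 + 2 * ‖P x‖ ^ 2 := by nlinarith [sq_nonneg (‖Du x - P x‖ - ‖P x‖), sq_nonneg (‖Du x - P x‖ + ‖P x‖)]
    have h6 : 0 ≤ (rotP x) ^ 2 := sq_nonneg _
    nlinarith [sq_nonneg (‖Du x - P x‖), sq_nonneg (‖P x‖)]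
  calc c * ((∫ x in A, ‖Du x‖ ^ 2) + (∫ x in A, ‖P x‖ ^ 2) + (∫ x in A, (rotP x) ^ 2))
      = ∫ x in A, c * (‖Du x‖ ^ 2 + ‖P x‖ ^ 2 + (rotP x) ^ 2) := by
        have h12 : IntegrableOn (fun x => ‖Du x‖ ^ 2 + ‖P x‖ ^ 2) A volume := hDu.add hP
        rw [integral_const_mul, integral_add h12 hrot, integral_add hDu hP]
    _ ≤ _ := key
end
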